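/- arXiv:0809.1395 — 2 statements merged into one kernel-verified Lean document; each statement's English description precedes it below -/
import Mathlib

section
/- The G12-lattice A_2(G12) is generated as a Z[G12]-module by the three elements u12 = (σ2−1)d1 − (σ1−1)d2, b1 = N1·d1 and b2 = N2·d2. -/
open MonoidAlgebra

set_option maxHeartbeats 1000000
set_option synthInstance.maxHeartbeats 400000

noncomputable section

/-! ## Generic (unbundled) group-cohomology notions in low degree -/

/-- `f : G → A` is a 1-cocycle for the (unbundled) action `act`. -/
def IsOneCocycle {G : Type*} [Group G] {A : Type*} [AddCommGroup A]
    (act : G → A → A) (f : G → A) : Prop :=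
  ∀ g h : G, f (g * h) = act g (f h) + f g

/-- `f : G → A` is a 1-coboundary for the (unbundled) action `act`. -/
def IsOneCoboundary {G : Type*} [Group G] {A : Type*} [AddCommGroup A]
    (act : G → A → A) (f : G → A) : Prop :=
  ∃ a : A, ∀ g : G, f g = act g a - a

/-- `f : G → G → A` is a 2-coboundary for the (unbundled) action `act`. -/
def IsTwoCoboundary {G : Type*} [Group G] {A : Type*} [AddCommGroup A]
    (act : G → A → A) (f : G → G → A) : Prop :=
  ∃ c : G → A, ∀ g h : G, f g h = act g (c h) - c (g * h) + c g

/-- restriction of an (unbundled) action to a subgroup. -/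
def resAct {G : Type*} [Group G] {A : Type*} (H : Subgroup G) (act : G → A → A) :
    H → A → A := fun h => act (h : G)

/-! ## Augmentation ideal for a general group -/

/-- the augmentation map `Z[G] → Z`. -/
def augGen (G : Type*) [Group G] : MonoidAlgebra ℤ G →+* ℤ :=
  (MonoidAlgebra.lift ℤ ℤ G 1).toRingHom

/-- the augmentation ideal `I[G] ⊆ Z[G]`. -/
def IGen (G : Type*) [Group G] : Ideal (MonoidAlgebra ℤ G) := RingHom.ker (augGen G)

/-- the action of `G` on `I[G]` by left multiplication. -/
def actIGen (G : Type*) [Group G] (g : G) (y : ↥(IGen G)) : ↥(IGen G) :=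
  ⟨of ℤ G g * y.val, by
    have h0 : augGen G y.val = 0 := y.2
    simp [IGen, RingHom.mem_ker, map_mul, h0]⟩

/-- the distinguished 1-cocycle `d_H : H → I[G]`, `h ↦ h - 1`. -/
def dGen {G : Type*} [Group G] (H : Subgroup G) (h : H) : ↥(IGen G) :=
  ⟨of ℤ G (h : G) - 1, by simp [IGen, RingHom.mem_ker, map_sub, augGen]⟩

/-! ## The groups of the paper -/

/-- the elementary abelian group `G₁₂` of order `p²`. -/
abbrev G12t (p : ℕ) := Multiplicative (ZMod p × ZMod p)
/-- a cyclic group of order `p`. -/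
abbrev Cpt (p : ℕ) := Multiplicative (ZMod p)
/-- the elementary abelian group `G = ⟨σ₁⟩ × ⟨σ₂⟩ × ⟨σ₃⟩ × ⟨σ₄⟩` of order `p⁴`. -/
abbrev Gp (p : ℕ) := Multiplicative (ZMod p × ZMod p × ZMod p × ZMod p)

def t1 (p : ℕ) : G12t p := Multiplicative.ofAdd (1, 0)
def t2 (p : ℕ) : G12t p := Multiplicative.ofAdd (0, 1)
def c1g (p : ℕ) : Cpt p := Multiplicative.ofAdd 1
def s1 (p : ℕ) : Gp p := Multiplicative.ofAdd (1, 0, 0, 0)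
def s2 (p : ℕ) : Gp p := Multiplicative.ofAdd (0, 1, 0, 0)
def s3 (p : ℕ) : Gp p := Multiplicative.ofAdd (0, 0, 1, 0)
def s4 (p : ℕ) : Gp p := Multiplicative.ofAdd (0, 0, 0, 1)

/-- the group ring `Z[G₁₂]`. -/
abbrev R12 (p : ℕ) := MonoidAlgebra ℤ (G12t p)
/-- the group ring `Z[⟨σ⟩]` of a cyclic group of order `p`. -/
abbrev RCp (p : ℕ) := MonoidAlgebra ℤ (Cpt p)
/-- the group ring `Z[G]`. -/
abbrev RG (p : ℕ) := MonoidAlgebra ℤ (Gp p)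

/-- the quotient map `G → G₁₂ = G/G₃₄`. -/
def π12 (p : ℕ) : Gp p →* G12t p :=
  AddMonoidHom.toMultiplicative
    { toFun := fun v => (v.1, v.2.1), map_zero' := rfl, map_add' := fun _ _ => rfl }

/-- the quotient map `G → ⟨σ₃⟩ = G/⟨σ₁,σ₂,σ₄⟩`. -/
def π3 (p : ℕ) : Gp p →* Cpt p :=
  AddMonoidHom.toMultiplicative
    { toFun := fun v => v.2.2.1, map_zero' := rfl, map_add' := fun _ _ => rfl }

/-- the quotient map `G → ⟨σ₄⟩ = G/⟨σ₁,σ₂,σ₃⟩`. -/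
def π4 (p : ℕ) : Gp p →* Cpt p :=
  AddMonoidHom.toMultiplicative
    { toFun := fun v => v.2.2.2, map_zero' := rfl, map_add' := fun _ _ => rfl }

/-- the inclusion `G₁₂ → G`. -/
def emb12 (p : ℕ) : G12t p →* Gp p :=
  AddMonoidHom.toMultiplicative
    { toFun := fun v => (v.1, v.2, 0, 0), map_zero' := rfl,
      map_add' := fun _ _ => by ext <;> simp }

/-- the subgroup `G₁₂ = ⟨σ₁, σ₂⟩ ≤ G`. -/
def G12sub (p : ℕ) : Subgroup (Gp p) := Subgroup.closure {s1 p, s2 p}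
/-- the subgroup `G₃₄ = ⟨σ₃, σ₄⟩ ≤ G`. -/
def G34sub (p : ℕ) : Subgroup (Gp p) := Subgroup.closure {s3 p, s4 p}

/-! ## The lattice `A₂(G₁₂)` and its distinguished elements -/

/-- the map `Z[G₁₂]·d₁ ⊕ Z[G₁₂]·d₂ → I[G₁₂] ⊆ Z[G₁₂]`, `dᵢ ↦ σᵢ - 1`. -/
def d12map (p : ℕ) : (R12 p × R12 p) →ₗ[R12 p] R12 p :=
  (LinearMap.toSpanSingleton (R12 p) (R12 p) (of ℤ (G12t p) (t1 p) - 1)).comp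
      (LinearMap.fst (R12 p) (R12 p) (R12 p)) +
  (LinearMap.toSpanSingleton (R12 p) (R12 p) (of ℤ (G12t p) (t2 p) - 1)).comp
      (LinearMap.snd (R12 p) (R12 p) (R12 p))

/-- the lattice `A₂(G₁₂)`, the kernel of `Z[G₁₂]·d₁ ⊕ Z[G₁₂]·d₂ → I[G₁₂]`. -/
def A2G12 (p : ℕ) : Submodule (R12 p) (R12 p × R12 p) := LinearMap.ker (d12map p)

/-- `u₁₂ = (σ₂-1)d₁ - (σ₁-1)d₂` as an element of `Z[G₁₂]·d₁ ⊕ Z[G₁₂]·d₂`. -/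
def u12raw (p : ℕ) : R12 p × R12 p :=
  (of ℤ (G12t p) (t2 p) - 1, -(of ℤ (G12t p) (t1 p) - 1))

/-- the norm element `N = 1 + g + ⋯ + g^(p-1)` of a group ring. -/
def NN (p : ℕ) {G : Type*} [CommGroup G] (g : G) : MonoidAlgebra ℤ G :=
  ∑ k ∈ Finset.range p, of ℤ G g ^ k

/-- `b₁ = N₁·d₁`. -/
def b1raw (p : ℕ) : R12 p × R12 p := (NN p (t1 p), 0)
/-- `b₂ = N₂·d₂`. -/
def b2raw (p : ℕ) : R12 p × R12 p := (0, NN p (t2 p))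

lemma ofAdd_pow_p (p : ℕ) {A : Type*} [AddCommGroup A] (a : A) (h : p • a = 0) :
    (Multiplicative.ofAdd a) ^ p = 1 := by
  rw [← ofAdd_nsmul, h]; rfl

lemma zmod_p_smul (p : ℕ) (x : ZMod p) : p • x = 0 := by
  rw [nsmul_eq_mul, ZMod.natCast_self, zero_mul]

lemma t1_pow_p (p : ℕ) : (t1 p) ^ p = 1 := by
  refine ofAdd_pow_p p _ ?_
  rw [Prod.smul_mk, zmod_p_smul, zmod_p_smul]; rfl

lemma t2_pow_p (p : ℕ) : (t2 p) ^ p = 1 := by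
  refine ofAdd_pow_p p _ ?_
  rw [Prod.smul_mk, zmod_p_smul, zmod_p_smul]; rfl

lemma c1g_pow_p (p : ℕ) : (c1g p) ^ p = 1 := by
  refine ofAdd_pow_p p _ (zmod_p_smul p _)

lemma NN_mul (p : ℕ) {G : Type*} [CommGroup G] (g : G) (h : g ^ p = 1) :
    NN p g * (of ℤ G g - 1) = 0 := by
  rw [NN, geom_sum_mul, ← map_pow, h, map_one, sub_self]

lemma u12raw_mem (p : ℕ) : u12raw p ∈ A2G12 p := by
  simp only [A2G12, LinearMap.mem_ker, d12map, LinearMap.add_apply, LinearMap.comp_apply,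
    LinearMap.fst_apply, LinearMap.snd_apply, LinearMap.toSpanSingleton_apply, u12raw,
    smul_eq_mul]
  ring

lemma b1raw_mem (p : ℕ) : b1raw p ∈ A2G12 p := by
  simp only [A2G12, LinearMap.mem_ker, d12map, LinearMap.add_apply, LinearMap.comp_apply,
    LinearMap.fst_apply, LinearMap.snd_apply, LinearMap.toSpanSingleton_apply, b1raw,
    smul_eq_mul, zero_mul, add_zero]
  exact NN_mul p _ (t1_pow_p p)

lemma b2raw_mem (p : ℕ) : b2raw p ∈ A2G12 p := by
  simp only [A2G12, LinearMap.mem_ker, d12map, LinearMap.add_apply, LinearMap.comp_apply,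
    LinearMap.fst_apply, LinearMap.snd_apply, LinearMap.toSpanSingleton_apply, b2raw,
    smul_eq_mul, zero_mul, zero_add]
  exact NN_mul p _ (t2_pow_p p)

/-- `u₁₂` as an element of `A₂(G₁₂)`. -/
def u12e (p : ℕ) : ↥(A2G12 p) := ⟨u12raw p, u12raw_mem p⟩
/-- `b₁` as an element of `A₂(G₁₂)`. -/
def b1e (p : ℕ) : ↥(A2G12 p) := ⟨b1raw p, b1raw_mem p⟩
/-- `b₂` as an element of `A₂(G₁₂)`. -/
def b2e (p : ℕ) : ↥(A2G12 p) := ⟨b2raw p, b2raw_mem p⟩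

/-- the action of `G₁₂` on `A₂(G₁₂)`. -/
def actA2 (p : ℕ) (x : G12t p) (v : ↥(A2G12 p)) : ↥(A2G12 p) :=
  of ℤ (G12t p) x • v

/-! ## The cyclic lattice `A₂(⟨σ⟩)` -/

/-- the map `Z[⟨σ⟩]·d → I[⟨σ⟩]`, `d ↦ σ - 1`. -/
def dcmap (p : ℕ) : RCp p →ₗ[RCp p] RCp p :=
  LinearMap.toSpanSingleton (RCp p) (RCp p) (of ℤ (Cpt p) (c1g p) - 1)

/-- the lattice `A₂(⟨σ⟩)` for a cyclic group of order `p`. -/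
def A2C (p : ℕ) : Submodule (RCp p) (RCp p) := LinearMap.ker (dcmap p)

/-- the norm element `N = 1 + σ + ⋯ + σ^(p-1)` as an element of `A₂(⟨σ⟩)`. -/
def NCe (p : ℕ) : ↥(A2C p) :=
  ⟨NN p (c1g p), by
    simp only [A2C, LinearMap.mem_ker, dcmap, LinearMap.toSpanSingleton_apply, smul_eq_mul]
    exact NN_mul p _ (c1g_pow_p p)⟩

/-- the action of `G` on `A₂(⟨σⱼ⟩)` through a projection `π : G → ⟨σⱼ⟩`. -/
def actCvia (p : ℕ) (π : Gp p →* Cpt p) (g : Gp p) (v : ↥(A2C p)) : ↥(A2C p) :=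
  of ℤ (Cpt p) (π g) • v

/-! ## The explicit canonical 2-cocycles -/

/-- the elements `u_{m,n} ∈ A₂(G₁₂)` (equation (13) of the paper). -/
def umn (p : ℕ) (m1 m2 n1 n2 : ℕ) : ↥(A2G12 p) :=
  (-(of ℤ (G12t p) (t1 p ^ m1) * ∑ j ∈ Finset.range n1, ∑ i ∈ Finset.range m2,
      of ℤ (G12t p) (t1 p ^ i * t2 p ^ j))) • u12e p +
  (of ℤ (G12t p) (t1 p ^ n1) * ∑ j ∈ Finset.range n2, ∑ i ∈ Finset.range m1,
      of ℤ (G12t p) (t1 p ^ i * t2 p ^ j)) • u12e p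

/-- the explicit 2-cocycle `c₁₂` representing the canonical class `[c_{G₁₂}]`. -/
def c12coc (p : ℕ) (x y : G12t p) : ↥(A2G12 p) :=
  let m1 := (Multiplicative.toAdd x).1.val
  let m2 := (Multiplicative.toAdd x).2.val
  let n1 := (Multiplicative.toAdd y).1.val
  let n2 := (Multiplicative.toAdd y).2.val
  of ℤ (G12t p) (t1 p ^ m1) • umn p 0 m2 n1 0 +
    ((m1 + n1) / p) • b1e p +
    ((m2 + n2) / p) • (of ℤ (G12t p) (t1 p ^ ((m1 + n1) % p)) • b2e p)

/-- the explicit 2-cocycle representing the canonical class of a cyclic group of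
order `p` with coefficients in `A₂(⟨σ⟩)`. -/
def ccyc (p : ℕ) (x y : Cpt p) : ↥(A2C p) :=
  if p ≤ (Multiplicative.toAdd x).val + (Multiplicative.toAdd y).val then NCe p else 0

/-! ## The lattice `Q = A₂(G₁₂) ⊕ K₃ ⊕ K₄` -/

/-- `K_j = A₂(⟨σⱼ⟩) ⊕ Z[⟨σⱼ⟩]`. -/
abbrev Kc (p : ℕ) := ↥(A2C p) × RCp p

/-- the carrier of the `G`-lattice `Q = A₂(G₁₂) ⊕ K₃ ⊕ K₄`. -/
abbrev Qc (p : ℕ) := ↥(A2G12 p) × Kc p × Kc p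

/-- the action of `G` on `Q`: `G₁₂` acts naturally on `A₂(G₁₂)` and trivially on
`K₃`, `K₄`; `⟨σⱼ⟩` acts naturally on `K_j` and trivially elsewhere. -/
def actQ (p : ℕ) (g : Gp p) (q : Qc p) : Qc p :=
  (of ℤ (G12t p) (π12 p g) • q.1,
   (of ℤ (Cpt p) (π3 p g) • q.2.1.1, of ℤ (Cpt p) (π3 p g) * q.2.1.2),
   (of ℤ (Cpt p) (π4 p g) • q.2.2.1, of ℤ (Cpt p) (π4 p g) * q.2.2.2))

/-- the 2-cocycle `ω = inf(c₁₂) - inf(c₃) - inf(c₄)` with values in `Q`. -/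
def ωc (p : ℕ) (g g' : Gp p) : Qc p :=
  (c12coc p (π12 p g) (π12 p g'),
   (-(ccyc p (π3 p g) (π3 p g')), 0),
   (-(ccyc p (π4 p g) (π4 p g')), 0))

/-- the order of the restriction of `[ω]` to a subgroup `H ≤ G` in `H²(H, Q)`. -/
def nOrd (p : ℕ) (H : Subgroup (Gp p)) : ℕ :=
  sInf {n : ℕ | 0 < n ∧
    IsTwoCoboundary (resAct H (actQ p)) fun h h' => n • ωc p (h : Gp p) (h' : Gp p)}

/-! ## The augmentation ideal `I[G]` and the lattice `M_ω` -/

/-- the augmentation map `Z[G] → Z`. -/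
def aug (p : ℕ) : RG p →+* ℤ := (MonoidAlgebra.lift ℤ ℤ (Gp p) 1).toRingHom

/-- the augmentation ideal `I[G]`. -/
def IG (p : ℕ) : Ideal (RG p) := RingHom.ker (aug p)

/-- the action of `G` on `I[G]` by left multiplication. -/
def actIG (p : ℕ) (g : Gp p) (y : ↥(IG p)) : ↥(IG p) :=
  ⟨of ℤ (Gp p) g * y.val, by
    have h0 : aug p y.val = 0 := y.2
    simp [IG, RingHom.mem_ker, map_mul, h0]⟩

/-- the 1-cocycle `d_H : H → I[G]`, `h ↦ h - 1`. -/
def dH (p : ℕ) (H : Subgroup (Gp p)) (h : H) : ↥(IG p) :=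
  ⟨of ℤ (Gp p) (h : Gp p) - 1, by simp [IG, RingHom.mem_ker, map_sub, aug]⟩

/-- the carrier of the `G`-lattice `M_ω = Q ⊕ I[G]`. -/
abbrev Mc (p : ℕ) := Qc p × ↥(IG p)

/-- the `Q`-valued correction term of the twisted action on `M_ω`:
`θ(g, Σ a_{g'} g') = Σ a_{g'} ω(g, g')`; on `y ∈ I[G]` (so `Σ a_{g'} = 0` and
`y = Σ a_{g'} (g' - 1)`) this is the `Q`-component of `g·(0, y)`. -/
def θω (p : ℕ) (g : Gp p) (y : RG p) : Qc p :=
  Finsupp.sum y.coeff fun g' a => a • ωc p g g'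

/-- the twisted action of `G` on `M_ω = Q ⊕ I[G]`: `g(x,0) = (gx, 0)` and
`g(0, g'-1) = (ω(g,g'), g(g'-1))`, extended `Z`-linearly. -/
def actM (p : ℕ) (g : Gp p) (m : Mc p) : Mc p :=
  (actQ p g m.1 + θω p g m.2.val, actIG p g m.2)

/-! ## The map `π : A₂(G₁₂) → Z/pZ` -/

/-- the `G₁₂`-module homomorphism `π : A₂(G₁₂) → Z/pZ`, determined by
`π(x·u₁₂ + y·b₁ + z·b₂) = ε(x) mod p`; concretely it sends `v = (v₁, v₂)` to
`Σ_g v₁(g)·(exponent of σ₂ in g)`. -/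
def πmap (p : ℕ) (v : ↥(A2G12 p)) : ZMod p :=
  Finsupp.sum (v : R12 p × R12 p).1.coeff fun g a => (a : ZMod p) * (Multiplicative.toAdd g).2

/-! ## The set `𝓗` of subgroups, the cochains `v_H`, and the lattice `M` -/

/-- the set of subgroups `𝓗 = {G} ∪ {⟨τ, σ₃, σ₄⟩ : τ ∈ G₁₂}`. -/
def HH (p : ℕ) : Set (Subgroup (Gp p)) :=
  insert ⊤ {H | ∃ τ ∈ G12sub p, H = Subgroup.closure {τ, s3 p, s4 p}}

/-- the 1-cochain `v_H : H₁₂ → A₂(G₁₂)`, `v_H(h̄₁) = Σ_{h̄ ∈ H₁₂} c₁₂(h̄₁, h̄)`,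
here inflated to a function of `h̄₁ ∈ G₁₂`. -/
def vH (p : ℕ) (H : Subgroup (Gp p)) (x : G12t p) : ↥(A2G12 p) :=
  ∑ᶠ h' : ↥(H.map (π12 p)), c12coc p x (h' : G12t p)

/-- the 1-cochain `f_H : H → M_ω`, `f_H(h) = (z_H(h) - v_H(h̄), n_H·(h-1))`,
built from a choice of 1-cochain `z_H : H → K₃ ⊕ K₄`. -/
def fHof (p : ℕ) (H : Subgroup (Gp p)) (zH : H → Kc p × Kc p) (h : H) : Mc p :=
  ((-(vH p H (π12 p (h : Gp p))), (zH h).1, (zH h).2),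
   (nOrd p H) • dH p H h)

/-- the carrier of the permutation lattice `P = ⊕_{H ∈ 𝓗} Z[G/H]`. -/
abbrev Pc (p : ℕ) := ∀ H : ↥(HH p), ((Gp p ⧸ (H : Subgroup (Gp p))) →₀ ℤ)

/-- the carrier of the `G`-lattice `M = M_ω ⊕ P`. -/
abbrev MC (p : ℕ) := Mc p × Pc p

/-- the action of `G` on `M = M_ω ⊕ P`, twisted by a family of 1-cocycles
`f_H : H → M_ω` (`H ∈ 𝓗`): `g(x, 0) = (gx, 0)` and
`g(0, u_{gᵢH}) = (gⱼ·f_H(h), u_{gⱼH})` where `g·gᵢ = gⱼ·h`, `h ∈ H`, and the coset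
representatives are chosen by `Quotient.out`. -/
def actMFull (p : ℕ) (fH : ∀ H : ↥(HH p), (↥(H.val) → Mc p))
    (g : Gp p) (m : MC p) : MC p :=
  (actM p g m.1 +
     ∑ᶠ H : ↥(HH p), Finsupp.sum (m.2 H) fun c a =>
       a • actM p (Quotient.out (g • c))
         (fH H ⟨(Quotient.out (g • c))⁻¹ * (g * Quotient.out c), by
            rw [← QuotientGroup.eq, QuotientGroup.out_eq', ← smul_eq_mul,
              MulAction.Quotient.mk_smul_out]⟩),
   fun H => Finsupp.mapDomain (fun c => g • c) (m.2 H))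

/-- the map `π' : M → Z/pZ`, `(x₀, x₁, x₂, y, z) ↦ π(x₀)`. -/
def πmap' (p : ℕ) (m : MC p) : ZMod p := πmap p m.1.1.1

/-- the norm element `N₃₄ = Σ_{g ∈ G₃₄} g ∈ Z[G]`. -/
def N34 (p : ℕ) : RG p := ∑ᶠ g : ↥(G34sub p), of ℤ (Gp p) (g : Gp p)

/-- the augmentation map `Z[G₁₂] → Z`. -/
def aug12 (p : ℕ) : R12 p →+* ℤ := (MonoidAlgebra.lift ℤ ℤ (G12t p) 1).toRingHom


/-! ## Auxiliary lemmas for statement0 -/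

section Aux

variable (p : ℕ)

/-- shorthand for group elements of `G12t p`. -/
def ee (a b : ZMod p) : G12t p := Multiplicative.ofAdd (a, b)

lemma ee_mul (a b c d : ZMod p) : ee p a b * ee p c d = ee p (a + c) (b + d) := rfl

lemma ee_inv (a b : ZMod p) : (ee p a b)⁻¹ = ee p (-a) (-b) := rfl

lemma one_ee : (1 : G12t p) = ee p 0 0 := rfl

lemma ee_inj {a b c d : ZMod p} (h : ee p a b = ee p c d) : a = c ∧ b = d := by
  have h2 := congrArg Multiplicative.toAdd h
  exact ⟨congrArg Prod.fst h2, congrArg Prod.snd h2⟩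

lemma ee_eta (g : G12t p) :
    ee p (Multiplicative.toAdd g).1 (Multiplicative.toAdd g).2 = g := by
  simp [ee]

lemma toAdd_ee_snd (a b : ZMod p) : (Multiplicative.toAdd (ee p a b)).2 = b := rfl

lemma t1_pow (n : ℕ) : t1 p ^ n = ee p (n : ZMod p) 0 := by
  induction n with
  | zero => rw [pow_zero, one_ee]; norm_num
  | succ n ih =>
      rw [pow_succ, ih, show t1 p = ee p 1 0 from rfl, ee_mul]
      congr 1 <;> push_cast <;> ring

lemma t2_pow (n : ℕ) : t2 p ^ n = ee p 0 (n : ZMod p) := by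
  induction n with
  | zero => rw [pow_zero, one_ee]; norm_num
  | succ n ih =>
      rw [pow_succ, ih, show t2 p = ee p 0 1 from rfl, ee_mul]
      congr 1 <;> push_cast <;> ring

lemma ee_mul_pow_t2_inv (a b : ZMod p) (j : ℕ) :
    ee p a b * (t2 p ^ j)⁻¹ = ee p a (b - (j : ZMod p)) := by
  rw [t2_pow, ee_inv, ee_mul]
  exact congrArg₂ (ee p) (by ring) (by ring)

lemma mul_NN_apply (w : R12 p) (g0 g : G12t p) :
    (w * NN p g0).coeff g = ∑ j ∈ Finset.range p, w.coeff (g * (g0 ^ j)⁻¹) := by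
  rw [NN, Finset.mul_sum, MonoidAlgebra.coeff_sum, Finset.sum_apply']
  refine Finset.sum_congr rfl fun j _ => ?_
  rw [← map_pow, of_apply, MonoidAlgebra.coeff_mul_single_apply, mul_one]

lemma shift_apply (w : R12 p) (g0 : G12t p) (h : w * of ℤ (G12t p) g0 = w)
    (g : G12t p) : w.coeff (g * g0) = w.coeff g := by
  have h2 : (w * of ℤ (G12t p) g0).coeff (g * g0) = w.coeff (g * g0) := by rw [h]
  rw [of_apply, MonoidAlgebra.coeff_mul_single_apply, mul_one, mul_inv_cancel_right] at h2
  exact h2.symm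

lemma shift_pow_apply (w : R12 p) (g0 : G12t p) (h : w * of ℤ (G12t p) g0 = w)
    (g : G12t p) (n : ℕ) : w.coeff (g * g0 ^ n) = w.coeff g := by
  induction n with
  | zero => rw [pow_zero, mul_one]
  | succ n ih => rw [pow_succ, ← mul_assoc, shift_apply p w g0 h, ih]

lemma const2_apply [NeZero p] (w : R12 p) (h : w * of ℤ (G12t p) (t2 p) = w)
    (a b : ZMod p) : w.coeff (ee p a b) = w.coeff (ee p a 0) := by
  have hb : ((b.val : ZMod p)) = b := ZMod.natCast_rightInverse b
  have h2 := shift_pow_apply p w (t2 p) h (ee p a 0) b.val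
  rw [t2_pow, ee_mul, add_zero, zero_add, hb] at h2
  exact h2

lemma const1_apply [NeZero p] (w : R12 p) (h : w * of ℤ (G12t p) (t1 p) = w)
    (a b : ZMod p) : w.coeff (ee p a b) = w.coeff (ee p 0 b) := by
  have ha : ((a.val : ZMod p)) = a := ZMod.natCast_rightInverse a
  have h2 := shift_pow_apply p w (t1 p) h (ee p 0 b) a.val
  rw [t1_pow, ee_mul, add_zero, zero_add, ha] at h2
  exact h2

lemma sum_ite_val [NeZero p] (b : ZMod p) (f : ℕ → ℤ) :
    ∑ j ∈ Finset.range p, (if (j : ZMod p) = b then f j else 0) = f b.val := by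
  rw [Finset.sum_eq_single_of_mem b.val (Finset.mem_range.2 (ZMod.val_lt b))]
  · rw [if_pos (ZMod.natCast_rightInverse b)]
  · intro j hj hne
    rw [if_neg]
    intro hc
    exact hne (by rw [← ZMod.val_cast_of_lt (Finset.mem_range.1 hj), hc])

lemma supp_mul_N2_apply [NeZero p] (w : R12 p)
    (hs : ∀ g, w.coeff g ≠ 0 → (Multiplicative.toAdd g).2 = 0) (a b : ZMod p) :
    (w * NN p (t2 p)).coeff (ee p a b) = w.coeff (ee p a 0) := by
  rw [mul_NN_apply]
  have hcong : ∀ j ∈ Finset.range p,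
      w.coeff (ee p a b * (t2 p ^ j)⁻¹) = if (j : ZMod p) = b then w.coeff (ee p a 0) else 0 := by
    intro j _
    rw [ee_mul_pow_t2_inv]
    by_cases hj : (j : ZMod p) = b
    · rw [if_pos hj, hj, sub_self]
    · rw [if_neg hj]
      by_contra hne
      have h0 : b - (j : ZMod p) = 0 := hs _ hne
      exact hj (by linear_combination -h0)
  rw [Finset.sum_congr rfl hcong, sum_ite_val]

lemma NN_mul_NN_apply [NeZero p] (g : G12t p) :
    (NN p (t1 p) * NN p (t2 p)).coeff g = 1 := by
  have expand : NN p (t1 p) * NN p (t2 p) =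
      ∑ i ∈ Finset.range p, ∑ j ∈ Finset.range p,
        MonoidAlgebra.single (ee p (i : ZMod p) (j : ZMod p)) (1 : ℤ) := by
    rw [NN, NN, Finset.sum_mul_sum]
    refine Finset.sum_congr rfl fun i _ => Finset.sum_congr rfl fun j _ => ?_
    rw [← map_pow, ← map_pow, of_apply, of_apply, MonoidAlgebra.single_mul_single,
      one_mul, t1_pow, t2_pow, ee_mul, add_zero, zero_add]
  rw [← ee_eta p g]
  set a := (Multiplicative.toAdd g).1
  set b := (Multiplicative.toAdd g).2
  rw [expand, MonoidAlgebra.coeff_sum, Finset.sum_apply']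
  simp only [MonoidAlgebra.coeff_sum, Finset.sum_apply', MonoidAlgebra.coeff_single, Finsupp.single_apply]
  have step : ∀ i ∈ Finset.range p,
      (∑ j ∈ Finset.range p, if ee p (i : ZMod p) (j : ZMod p) = ee p a b then (1:ℤ) else 0)
        = if (i : ZMod p) = a then 1 else 0 := by
    intro i _
    by_cases hi : (i : ZMod p) = a
    · rw [if_pos hi]
      have : ∀ j ∈ Finset.range p,
          (if ee p (i : ZMod p) (j : ZMod p) = ee p a b then (1:ℤ) else 0)
            = if (j : ZMod p) = b then 1 else 0 := by
        intro j _
        refine if_congr ⟨fun h => (ee_inj p h).2, fun h => by rw [hi, h]⟩ rfl rfl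
      rw [Finset.sum_congr rfl this, sum_ite_val p b (fun _ => (1:ℤ))]
    · rw [if_neg hi]
      refine Finset.sum_eq_zero fun j _ => ?_
      rw [if_neg]
      intro h
      exact hi (ee_inj p h).1
  rw [Finset.sum_congr rfl step, sum_ite_val p a (fun _ => (1:ℤ))]

lemma const_all [NeZero p] (w : R12 p)
    (h1 : w * of ℤ (G12t p) (t1 p) = w) (h2 : w * of ℤ (G12t p) (t2 p) = w) :
    w = (w.coeff 1) • (NN p (t1 p) * NN p (t2 p)) := by
  ext g
  rw [MonoidAlgebra.coeff_smul, Finsupp.smul_apply, NN_mul_NN_apply, smul_eq_mul, mul_one]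
  conv_lhs => rw [← ee_eta p g]
  rw [const2_apply p w h2, const1_apply p w h1]
  rfl

/-- the telescoping coefficient map. -/
def qmap (z : R12 p) : R12 p :=
  z.coeff.sum fun g c => c • (of ℤ (G12t p) (t1 p ^ (Multiplicative.toAdd g).1.val) *
    ∑ j ∈ Finset.range (Multiplicative.toAdd g).2.val, of ℤ (G12t p) (t2 p) ^ j)

/-- projection onto the `σ₂`-degree-zero part. -/
def rmap (z : R12 p) : R12 p :=
  MonoidAlgebra.mapDomain (fun g => ee p (Multiplicative.toAdd g).1 0) z

lemma qmap_add (z1 z2 : R12 p) : qmap p (z1 + z2) = qmap p z1 + qmap p z2 := by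
  unfold qmap; rw [MonoidAlgebra.coeff_add]; exact Finsupp.sum_add_index' (fun _ => zero_smul _ _) (fun _ _ _ => add_smul _ _ _)

lemma rmap_add (z1 z2 : R12 p) : rmap p (z1 + z2) = rmap p z1 + rmap p z2 :=
  MonoidAlgebra.mapDomain_add _ _ _

lemma qmap_single (g : G12t p) (c : ℤ) :
    qmap p (MonoidAlgebra.single g c) = c • (of ℤ (G12t p) (t1 p ^ (Multiplicative.toAdd g).1.val) *
      ∑ j ∈ Finset.range (Multiplicative.toAdd g).2.val, of ℤ (G12t p) (t2 p) ^ j) := by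
  unfold qmap; rw [MonoidAlgebra.coeff_single]; exact Finsupp.sum_single_index (zero_smul _ _)

lemma rmap_single (g : G12t p) (c : ℤ) :
    rmap p (MonoidAlgebra.single g c) = MonoidAlgebra.single (ee p (Multiplicative.toAdd g).1 0) c :=
  MonoidAlgebra.mapDomain_single

lemma decomp [NeZero p] (z : R12 p) :
    z = rmap p z + (of ℤ (G12t p) (t2 p) - 1) * qmap p z := by
  induction z using MonoidAlgebra.induction_linear with
  | zero =>
      show (0 : R12 p) = rmap p 0 + _ * qmap p 0
      rw [show rmap p 0 = 0 from MonoidAlgebra.mapDomain_zero _,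
        show qmap p 0 = 0 from Finsupp.sum_zero_index, mul_zero, add_zero]
  | add f g hf hg =>
      rw [rmap_add, qmap_add, mul_add]
      linear_combination hf + hg
  | single g c =>
      rw [rmap_single, qmap_single]
      have ha : (((Multiplicative.toAdd g).1.val : ZMod p)) = (Multiplicative.toAdd g).1 :=
        ZMod.natCast_rightInverse _
      have hb : (((Multiplicative.toAdd g).2.val : ZMod p)) = (Multiplicative.toAdd g).2 :=
        ZMod.natCast_rightInverse _
      have hg' : t1 p ^ (Multiplicative.toAdd g).1.val * t2 p ^ (Multiplicative.toAdd g).2.val = g := by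
        rw [t1_pow, t2_pow, ee_mul, add_zero, zero_add, ha, hb, ee_eta]
      have key : (of ℤ (G12t p) (t2 p) - 1) *
          (of ℤ (G12t p) (t1 p ^ (Multiplicative.toAdd g).1.val) *
            ∑ j ∈ Finset.range (Multiplicative.toAdd g).2.val, of ℤ (G12t p) (t2 p) ^ j) =
          MonoidAlgebra.single g 1 - MonoidAlgebra.single (ee p (Multiplicative.toAdd g).1 0) 1 := by
        have hgeom := geom_sum_mul (of ℤ (G12t p) (t2 p)) ((Multiplicative.toAdd g).2.val)
        have h2 : (MonoidAlgebra.single g 1 : R12 p) =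
            of ℤ (G12t p) (t1 p ^ (Multiplicative.toAdd g).1.val) *
              of ℤ (G12t p) (t2 p) ^ (Multiplicative.toAdd g).2.val := by
          rw [← map_pow, ← map_mul, hg', of_apply]
        have h3 : (MonoidAlgebra.single (ee p (Multiplicative.toAdd g).1 0) 1 : R12 p) =
            of ℤ (G12t p) (t1 p ^ (Multiplicative.toAdd g).1.val) := by
          rw [t1_pow, ha, of_apply]
        rw [h2, h3]
        linear_combination (of ℤ (G12t p) (t1 p ^ (Multiplicative.toAdd g).1.val)) * hgeom
      rw [mul_smul_comm, key, smul_sub, MonoidAlgebra.smul_single, MonoidAlgebra.smul_single,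
        smul_eq_mul, mul_one]
      abel

lemma rmap_snd_eq_zero (z : R12 p) (g : G12t p) (hg : (rmap p z).coeff g ≠ 0) :
    (Multiplicative.toAdd g).2 = 0 := by
  classical
  have hsup : g ∈ (Finsupp.mapDomain (fun g => ee p (Multiplicative.toAdd g).1 0) z.coeff).support := Finsupp.mem_support_iff.2 hg
  have himg := Finsupp.mapDomain_support hsup
  obtain ⟨g', _, rfl⟩ := Finset.mem_image.1 himg
  rfl

lemma killN [NeZero p] (z : R12 p) (h : z * NN p (t2 p) = 0) :
    z = (of ℤ (G12t p) (t2 p) - 1) * qmap p z := by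
  have hd := decomp p z
  have hNN : NN p (t2 p) * (of ℤ (G12t p) (t2 p) - 1) = 0 := NN_mul p _ (t2_pow_p p)
  have hN : rmap p z * NN p (t2 p) = 0 := by
    have h2 : (rmap p z + (of ℤ (G12t p) (t2 p) - 1) * qmap p z) * NN p (t2 p) = 0 := by
      rw [← hd]; exact h
    linear_combination h2 - qmap p z * hNN
  have hr : rmap p z = 0 := by
    have hz : ∀ a : ZMod p, (rmap p z).coeff (ee p a 0) = 0 := by
      intro a
      have h3 : (rmap p z * NN p (t2 p)).coeff (ee p a 0) = (0 : R12 p).coeff (ee p a 0) := by rw [hN]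
      rw [supp_mul_N2_apply p _ (rmap_snd_eq_zero p z) a 0, MonoidAlgebra.coeff_zero, Finsupp.zero_apply] at h3
      exact h3
    ext g
    by_cases hg : (Multiplicative.toAdd g).2 = 0
    · rw [MonoidAlgebra.coeff_zero, Finsupp.zero_apply, ← ee_eta p g, hg]
      exact hz _
    · rw [MonoidAlgebra.coeff_zero, Finsupp.zero_apply]
      by_contra hne
      exact hg (rmap_snd_eq_zero p z g hne)
  calc z = rmap p z + (of ℤ (G12t p) (t2 p) - 1) * qmap p z := hd
    _ = (of ℤ (G12t p) (t2 p) - 1) * qmap p z := by rw [hr, zero_add]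

/-- the `σ₂`-degree-zero zslice. -/
def zslice (w : R12 p) : R12 p :=
  MonoidAlgebra.ofCoeff (Finsupp.filter (fun g => (Multiplicative.toAdd g).2 = 0) w.coeff)

lemma slice_apply (w : R12 p) (g : G12t p) :
    (zslice p w).coeff g = if (Multiplicative.toAdd g).2 = 0 then w.coeff g else 0 := Finsupp.filter_apply _ _ _

lemma const2_norm [NeZero p] (w : R12 p) (h : w * of ℤ (G12t p) (t2 p) = w) :
    w = zslice p w * NN p (t2 p) := by
  classical
  have hs : ∀ g, (zslice p w).coeff g ≠ 0 →
      (Multiplicative.toAdd g).2 = 0 := by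
    intro g hg
    rw [slice_apply] at hg
    by_contra hc
    rw [if_neg hc] at hg
    exact hg rfl
  ext g
  rw [← ee_eta p g]
  rw [supp_mul_N2_apply p _ hs, slice_apply, if_pos (toAdd_ee_snd p _ 0),
    const2_apply p w h]

end Aux

theorem statement0 (p : ℕ) (hp : p.Prime) :
    Submodule.span (R12 p) {u12raw p, b1raw p, b2raw p} = A2G12 p := by
  haveI : NeZero p := ⟨hp.ne_zero⟩
  apply le_antisymm
  · rw [Submodule.span_le]
    intro v hv
    simp only [Set.mem_insert_iff, Set.mem_singleton_iff] at hv
    rcases hv with rfl | rfl | rfl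
    exacts [u12raw_mem p, b1raw_mem p, b2raw_mem p]
  · intro v hv
    obtain ⟨x, y⟩ := v
    have hker : x * (of ℤ (G12t p) (t1 p) - 1) + y * (of ℤ (G12t p) (t2 p) - 1) = 0 := by
      simpa only [A2G12, LinearMap.mem_ker, d12map, LinearMap.add_apply, LinearMap.comp_apply,
        LinearMap.fst_apply, LinearMap.snd_apply, LinearMap.toSpanSingleton_apply,
        smul_eq_mul] using hv
    have hN1 : NN p (t1 p) * (of ℤ (G12t p) (t1 p) - 1) = 0 := NN_mul p _ (t1_pow_p p)
    have hN2 : NN p (t2 p) * (of ℤ (G12t p) (t2 p) - 1) = 0 := NN_mul p _ (t2_pow_p p)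
    have hz1a : (x * NN p (t2 p)) * of ℤ (G12t p) (t1 p) = x * NN p (t2 p) := by
      linear_combination NN p (t2 p) * hker - y * hN2
    have hz1b : (x * NN p (t2 p)) * of ℤ (G12t p) (t2 p) = x * NN p (t2 p) := by
      linear_combination x * hN2
    have hz1 := const_all p (x * NN p (t2 p)) hz1a hz1b
    set c : ℤ := (x * NN p (t2 p)).coeff 1 with hc
    rw [zsmul_eq_mul] at hz1
    have hxc : (x - (c : R12 p) * NN p (t1 p)) * NN p (t2 p) = 0 := by
      linear_combination hz1
    have hx : x - (c : R12 p) * NN p (t1 p) =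
        (of ℤ (G12t p) (t2 p) - 1) * qmap p (x - (c : R12 p) * NN p (t1 p)) :=
      killN p _ hxc
    set α := qmap p (x - (c : R12 p) * NN p (t1 p)) with hα
    have hy'2 : (y + α * (of ℤ (G12t p) (t1 p) - 1)) * of ℤ (G12t p) (t2 p) =
        y + α * (of ℤ (G12t p) (t1 p) - 1) := by
      linear_combination hker - (of ℤ (G12t p) (t1 p) - 1) * hx - (c : R12 p) * hN1
    have hy := const2_norm p _ hy'2
    set γ : R12 p := zslice p (y + α * (of ℤ (G12t p) (t1 p) - 1)) with hγ
    have hrepr : (x, y) = α • u12raw p + (c : R12 p) • b1raw p + γ • b2raw p := by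
      simp only [u12raw, b1raw, b2raw, Prod.smul_mk, Prod.mk_add_mk, Prod.mk.injEq,
        smul_eq_mul]
      constructor
      · linear_combination hx
      · linear_combination hy
    rw [hrepr]
    refine Submodule.add_mem _ (Submodule.add_mem _ ?_ ?_) ?_
    · exact Submodule.smul_mem _ _ (Submodule.subset_span (by simp))
    · exact Submodule.smul_mem _ _ (Submodule.subset_span (by simp))
    · exact Submodule.smul_mem _ _ (Submodule.subset_span (by simp))


end
end

section
/- For j ∈ {3, 4} and every subgroup H ≤ G, the order of res^G_H(inf([c_{⟨σj⟩}])) in H^2(H, A_2(⟨σj⟩)) equals |H_j|; in particular it equals p when H_j is nontrivial and 1 otherwise. -/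
open MonoidAlgebra

set_option maxHeartbeats 1000000
set_option synthInstance.maxHeartbeats 400000

noncomputable section

section MyAux

variable (p : ℕ) [NeZero p]

lemma my_c1g_pow (k : ℕ) : (c1g p) ^ k = Multiplicative.ofAdd ((k : ZMod p)) := by
  rw [c1g, ← ofAdd_nsmul]
  congr 1
  simp [nsmul_eq_mul]

lemma my_A2C_triv (x : Cpt p) (v : ↥(A2C p)) : of ℤ (Cpt p) x • v = v := by
  have hmem : v.val * (of ℤ (Cpt p) (c1g p)) = v.val := by
    have h0 : dcmap p v.val = 0 := v.2
    rw [dcmap, LinearMap.toSpanSingleton_apply, smul_eq_mul, mul_sub, mul_one, sub_eq_zero] at h0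
    exact h0
  have hpow : ∀ k : ℕ, v.val * (of ℤ (Cpt p) (c1g p)) ^ k = v.val := by
    intro k; induction k with
    | zero => simp
    | succ m ih => rw [pow_succ, ← mul_assoc, ih, hmem]
  have hx : x = (c1g p) ^ (Multiplicative.toAdd x).val := by
    rw [my_c1g_pow]
    simp [ZMod.natCast_val, ZMod.cast_id]
  apply Subtype.ext
  show of ℤ (Cpt p) x * v.val = v.val
  rw [hx, map_pow, mul_comm]
  exact hpow _

lemma my_val_add_carry (x y : ZMod p) :
    x.val + y.val = (x + y).val + p * (if p ≤ x.val + y.val then 1 else 0) := by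
  have hx := ZMod.val_lt x
  have hy := ZMod.val_lt y
  have h2 := Nat.mod_add_div (x.val + y.val) p
  have hdiv : (x.val + y.val) / p = if p ≤ x.val + y.val then 1 else 0 := by
    split
    · exact Nat.div_eq_of_lt_le (by omega) (by omega)
    · exact Nat.div_eq_of_lt (by omega)
  rw [hdiv] at h2
  rw [ZMod.val_add]
  omega

end MyAux

def phiz (p : ℕ) : ↥(A2C p) →+ ℤ :=
  (Finsupp.applyAddHom (1 : Cpt p)).comp
    ((MonoidAlgebra.coeffAddEquiv.toAddMonoidHom).comp (A2C p).subtype.toAddMonoidHom)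

section MyAux2
variable (p : ℕ) [NeZero p]

lemma my_phiz_NCe (hp : p.Prime) : phiz p (NCe p) = 1 := by
  show (NN p (c1g p) : RCp p).coeff 1 = 1
  rw [NN, MonoidAlgebra.coeff_sum, Finsupp.finset_sum_apply]
  have h1 : ∀ k ∈ Finset.range p,
      ((of ℤ (Cpt p) (c1g p) ^ k : RCp p).coeff (1 : Cpt p)) = if k = 0 then (1:ℤ) else 0 := by
    intro k hk
    rw [← map_pow, MonoidAlgebra.of_apply, MonoidAlgebra.coeff_single, Finsupp.single_apply]
    by_cases h : k = 0
    · subst h; simp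
    · rw [if_neg h, if_neg]
      intro hc
      rw [my_c1g_pow] at hc
      have h0 : ((k : ZMod p)) = 0 := Multiplicative.ofAdd.injective hc
      exact h (Nat.eq_zero_of_dvd_of_lt ((ZMod.natCast_eq_zero_iff k p).1 h0)
        (Finset.mem_range.1 hk))
  rw [Finset.sum_congr rfl h1, Finset.sum_ite_eq' (Finset.range p) 0 (fun _ => (1:ℤ))]
  simp [hp.pos]

lemma my_phiz_ccyc (hp : p.Prime) (x y : Cpt p) :
    phiz p (ccyc p x y) =
      if p ≤ (Multiplicative.toAdd x).val + (Multiplicative.toAdd y).val then 1 else 0 := by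
  rw [ccyc]
  split
  · exact my_phiz_NCe p hp
  · exact map_zero _

end MyAux2

section MyAux3
variable (p : ℕ) [NeZero p]

lemma my_cob_p (π : Gp p →* Cpt p) (H : Subgroup (Gp p)) :
    IsTwoCoboundary (resAct H (actCvia p π))
      (fun h h' => p • ccyc p (π (h : Gp p)) (π (h' : Gp p))) := by
  refine ⟨fun h => (Multiplicative.toAdd (π (h : Gp p))).val • NCe p, fun g h => ?_⟩
  have hact : resAct H (actCvia p π) g
      ((Multiplicative.toAdd (π (h : Gp p))).val • NCe p)
      = (Multiplicative.toAdd (π (h : Gp p))).val • NCe p := my_A2C_triv p _ _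
  rw [hact]
  set x := Multiplicative.toAdd (π (g : Gp p)) with hxdef
  set y := Multiplicative.toAdd (π (h : Gp p)) with hydef
  have hgh : Multiplicative.toAdd (π ((g * h : H) : Gp p)) = x + y := by
    rw [Subgroup.coe_mul, map_mul]; rfl
  beta_reduce
  rw [hgh, sub_add_eq_add_sub, eq_sub_iff_add_eq, ← add_smul]
  show p • (if p ≤ x.val + y.val then NCe p else 0) + (x + y).val • NCe p
      = (y.val + x.val) • NCe p
  have hc := my_val_add_carry p x y
  split
  · next hle =>
    have h1 : x.val + y.val = (x + y).val + p := by rw [if_pos hle] at hc; omega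
    rw [← add_smul]
    congr 1
    omega
  · next hle =>
    have h1 : x.val + y.val = (x + y).val := by rw [if_neg hle] at hc; omega
    rw [smul_zero, zero_add]
    congr 1
    omega
end MyAux3

section MyAux4
variable (p : ℕ) [NeZero p]

lemma my_gp_pow_p (g : Gp p) : g ^ p = 1 := by
  refine ofAdd_pow_p p (Multiplicative.toAdd g) ?_
  ext <;> simp [zmod_p_smul]

lemma my_dvd_of_cob (hp : p.Prime) (π : Gp p →* Cpt p) (H : Subgroup (Gp p))
    (h0 : H) (ha : Multiplicative.toAdd (π (h0 : Gp p)) ≠ 0) (n : ℕ)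
    (hcob : IsTwoCoboundary (resAct H (actCvia p π))
      (fun h h' => n • ccyc p (π (h : Gp p)) (π (h' : Gp p)))) :
    p ∣ n := by
  obtain ⟨c, hc⟩ := hcob
  set a : ZMod p := Multiplicative.toAdd (π (h0 : Gp p)) with hadef
  -- basic identity after applying phiz
  have hc' : ∀ g h : H,
      (n : ℤ) * (if p ≤ (Multiplicative.toAdd (π (g : Gp p))).val +
          (Multiplicative.toAdd (π (h : Gp p))).val then 1 else 0)
        = phiz p (c h) - phiz p (c (g * h)) + phiz p (c g) := by
    intro g h
    have h1 := hc g h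
    beta_reduce at h1
    rw [show resAct H (actCvia p π) g (c h) = c h from my_A2C_triv p _ _] at h1
    have h2 := congrArg (phiz p) h1
    rw [map_nsmul, map_add, map_sub, my_phiz_ccyc p hp] at h2
    simpa [nsmul_eq_mul] using h2
  -- c'(1) = 0
  have hc1 : phiz p (c 1) = 0 := by
    have h1 := hc' 1 1
    rw [if_neg] at h1
    · simp only [mul_one, mul_zero] at h1
      linarith
    · have := hp.pos
      simp only [OneMemClass.coe_one, map_one, toAdd_one, ZMod.val_zero, add_zero]
      omega
  -- toAdd (π (h0^i)) = i • a
  have hpowa : ∀ i : ℕ, Multiplicative.toAdd (π ((h0 ^ i : H) : Gp p)) = i • a := by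
    intro i
    rw [SubmonoidClass.coe_pow, map_pow]
    exact toAdd_pow _ _
  -- telescoping the cocycle sum
  have hsum : (n : ℤ) * ∑ i ∈ Finset.range p,
      (if p ≤ (i • a).val + a.val then (1:ℤ) else 0) = p * phiz p (c h0) := by
    rw [Finset.mul_sum]
    have hterm : ∀ i ∈ Finset.range p,
        (n : ℤ) * (if p ≤ (i • a).val + a.val then (1:ℤ) else 0)
          = phiz p (c h0) - phiz p (c (h0 ^ (i+1))) + phiz p (c (h0 ^ i)) := by
      intro i _
      have := hc' (h0 ^ i) h0
      rw [hpowa i] at this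
      rw [this, pow_succ]
    rw [Finset.sum_congr rfl hterm]
    have hp1 : h0 ^ p = 1 := by
      apply Subtype.ext
      rw [SubmonoidClass.coe_pow]
      exact my_gp_pow_p p _
    have htel : ∑ i ∈ Finset.range p, (phiz p (c (h0 ^ i)) - phiz p (c (h0 ^ (i+1)))) = 0 := by
      rw [Finset.sum_range_sub' (fun i => phiz p (c (h0 ^ i)))]
      rw [pow_zero, hp1, hc1, sub_self]
    calc ∑ i ∈ Finset.range p,
          (phiz p (c h0) - phiz p (c (h0 ^ (i+1))) + phiz p (c (h0 ^ i)))
        = ∑ i ∈ Finset.range p,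
          (phiz p (c h0) + (phiz p (c (h0 ^ i)) - phiz p (c (h0 ^ (i+1))))) := by
          apply Finset.sum_congr rfl; intro i _; ring
      _ = p * phiz p (c h0) := by
          rw [Finset.sum_add_distrib, htel, add_zero, Finset.sum_const, Finset.card_range,
            nsmul_eq_mul]
  -- the carry sum equals val a
  have hS : ∑ i ∈ Finset.range p, (if p ≤ (i • a).val + a.val then (1:ℤ) else 0)
      = (a.val : ℤ) := by
    have hterm : ∀ i ∈ Finset.range p,
        (p : ℤ) * (if p ≤ (i • a).val + a.val then (1:ℤ) else 0)
          = (((i • a).val : ℤ) - (((i+1) • a).val : ℤ)) + (a.val : ℤ) := by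
      intro i _
      have hcarry := my_val_add_carry p (i • a) a
      rw [show (i • a) + a = (i+1) • a by rw [succ_nsmul]] at hcarry
      split
      · next hle =>
        rw [if_pos hle] at hcarry
        push_cast
        omega
      · next hle =>
        rw [if_neg hle] at hcarry
        push_cast
        omega
    have h2 : (p : ℤ) * ∑ i ∈ Finset.range p, (if p ≤ (i • a).val + a.val then (1:ℤ) else 0)
        = (p : ℤ) * (a.val : ℤ) := by
      rw [Finset.mul_sum, Finset.sum_congr rfl hterm, Finset.sum_add_distrib,
        Finset.sum_range_sub' (fun i => (((i • a).val : ℕ) : ℤ)), Finset.sum_const,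
        Finset.card_range, nsmul_eq_mul]
      simp [zmod_p_smul]
    have hpne : (p : ℤ) ≠ 0 := by exact_mod_cast hp.ne_zero
    exact mul_left_cancel₀ hpne h2
  rw [hS] at hsum
  have hdvd : (p : ℤ) ∣ (n : ℤ) * (a.val : ℤ) := ⟨phiz p (c h0), hsum⟩
  rcases ((Nat.prime_iff_prime_int.1 hp).dvd_mul.1 hdvd) with h | h
  · exact_mod_cast h
  · exfalso
    have : p ∣ a.val := by exact_mod_cast h
    have hlt := ZMod.val_lt a
    have hpos := ZMod.val_pos.2 ha
    have := Nat.le_of_dvd hpos this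
    omega

end MyAux4

section MyMain
variable (p : ℕ) [NeZero p]

lemma my_card_cases (hp : p.Prime) (π : Gp p →* Cpt p) (H : Subgroup (Gp p)) :
    (H.map π = ⊥ ∧ Nat.card (H.map π) = 1) ∨ (H.map π ≠ ⊥ ∧ Nat.card (H.map π) = p) := by
  have hdvd : Nat.card (H.map π) ∣ p := by
    have h1 : Nat.card (H.map π) ∣ Nat.card (Cpt p) := Subgroup.card_subgroup_dvd_card _
    rwa [Nat.card_congr Multiplicative.toAdd, Nat.card_zmod] at h1
  rcases (Nat.dvd_prime hp).1 hdvd with h | h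
  · exact Or.inl ⟨Subgroup.card_eq_one.1 h, h⟩
  · right
    refine ⟨fun hbot => ?_, h⟩
    rw [hbot, Nat.card_eq_one_iff_unique.2 ⟨?_, ?_⟩] at h
    · exact hp.one_lt.ne' h.symm
    · exact ⟨fun a b => Subtype.ext (by rw [Subgroup.mem_bot.1 a.2, Subgroup.mem_bot.1 b.2])⟩
    · exact ⟨1⟩

end MyMain


theorem statement6 (p : ℕ) [NeZero p] (hp : p.Prime) (hodd : p ≠ 2)
    (π : Gp p →* Cpt p) (hπ : π = π3 p ∨ π = π4 p) (H : Subgroup (Gp p)) :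
    (IsTwoCoboundary (resAct H (actCvia p π))
      (fun h h' => (Nat.card (H.map π)) • ccyc p (π (h : Gp p)) (π (h' : Gp p))) ∧
     ∀ n : ℕ, 0 < n →
      IsTwoCoboundary (resAct H (actCvia p π))
        (fun h h' => n • ccyc p (π (h : Gp p)) (π (h' : Gp p))) →
      (Nat.card (H.map π)) ∣ n) ∧
    (H.map π = ⊥ → Nat.card (H.map π) = 1) ∧
    (H.map π ≠ ⊥ → Nat.card (H.map π) = p) := by
  rcases my_card_cases p hp π H with ⟨hbot, hcard⟩ | ⟨hbot, hcard⟩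
  · refine ⟨⟨?_, ?_⟩, fun _ => hcard, fun h => absurd hbot h⟩
    · -- every element maps to 1, cocycle vanishes
      have htriv : ∀ h : H, π (h : Gp p) = 1 := by
        intro h
        have := ((Subgroup.map_eq_bot_iff H).1 hbot) h.2
        simpa using this
      refine ⟨fun _ => 0, fun g h => ?_⟩
      beta_reduce
      rw [htriv g, htriv h]
      have hz : ccyc p (1 : Cpt p) (1 : Cpt p) = 0 := by
        rw [ccyc, if_neg]
        have := hp.pos
        simp only [toAdd_one, ZMod.val_zero, add_zero]
        omega
      rw [hz, smul_zero]
      show (0 : ↥(A2C p)) = resAct H (actCvia p π) g 0 - 0 + 0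
      rw [show resAct H (actCvia p π) g 0 = of ℤ (Cpt p) (π (g : Gp p)) • (0 : ↥(A2C p)) from rfl,
        smul_zero, sub_zero, add_zero]
    · intro n _ _
      rw [hcard]
      exact one_dvd n
  · have hex : ∃ h0 : H, Multiplicative.toAdd (π (h0 : Gp p)) ≠ 0 := by
      by_contra hcon
      push_neg at hcon
      apply hbot
      rw [Subgroup.map_eq_bot_iff H]
      intro x hx
      have := hcon ⟨x, hx⟩
      rw [MonoidHom.mem_ker]
      have : Multiplicative.toAdd (π x) = 0 := this
      calc π x = Multiplicative.ofAdd (Multiplicative.toAdd (π x)) := rfl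
        _ = 1 := by rw [this]; rfl
    obtain ⟨h0, ha⟩ := hex
    refine ⟨⟨?_, fun n _ hc => ?_⟩, fun h => absurd h hbot, fun _ => hcard⟩
    · rw [hcard]
      exact my_cob_p p π H
    · rw [hcard]
      exact my_dvd_of_cob p hp π H h0 ha n hc

end
end
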